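/- The kernel of P equals the image of Q; that is, a vector y ∈ ℤ^{2(k+1)} satisfies P(y) = 0 if and only if y = Q(x) for some x ∈ ℤ^{k+1}. -/

import Mathlib

/-- The map `Q : ℤ^{k+1} → ℤ^{2(k+1)}` sending the `i`-th standard basis vector
(`0 ≤ i ≤ k`) to the vector with entry `+1` in coordinates `a_{i-1}` and `b_i`, entry `-1`
in coordinates `a_i` and `b_{i-1}`, and `0` elsewhere (indices read modulo `k+1`).
The first component of the output records the `a`-coordinates and the second the
`b`-coordinates; explicitly `(Q x)_{a_j} = x_{j+1} - x_j` and `(Q x)_{b_j} = x_j - x_{j+1}`. -/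
def Qmap (k : ℕ) (x : Fin (k + 1) → ℤ) : (Fin (k + 1) → ℤ) × (Fin (k + 1) → ℤ) :=
  (fun j => x (j + 1) - x j, fun j => x j - x (j + 1))

/-- The map `P : ℤ^{2(k+1)} → ℤ^{k+3}` sending the basis vector `a_i` to the vector with
`u = 1`, `v = 0`, `z_i = 1`, rest `0`, and `b_i` to the vector with `u = 0`, `v = 1`,
`z_i = 1`, rest `0`.  The target is written as `ℤ × ℤ × (Fin (k+1) → ℤ)`, with the
coordinates `(u, v, z)`. -/
def Pmap (k : ℕ) (y : (Fin (k + 1) → ℤ) × (Fin (k + 1) → ℤ)) :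
    ℤ × ℤ × (Fin (k + 1) → ℤ) :=
  (∑ i, y.1 i, ∑ i, y.2 i, fun i => y.1 i + y.2 i)

lemma sum_shift (k : ℕ) (x : Fin (k + 1) → ℤ) : ∑ i, x (i + 1) = ∑ i, x i :=
  Fintype.sum_equiv (Equiv.addRight 1) _ _ (fun _ => rfl)

open Fin.NatCast

/-- The kernel of `P` equals the image of `Q`. -/
theorem stmt1 (k : ℕ) (hk : 1 ≤ k) (y : (Fin (k + 1) → ℤ) × (Fin (k + 1) → ℤ)) :
    Pmap k y = 0 ↔ ∃ x : Fin (k + 1) → ℤ, y = Qmap k x := by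
  constructor
  · intro h
    simp only [Pmap, Prod.ext_iff, Prod.fst_zero, Prod.snd_zero] at h
    obtain ⟨h1, h2, h3⟩ := h
    have h3' : ∀ i, y.2 i = -(y.1 i) := by
      intro i
      have := congrFun h3 i
      simp at this
      linarith
    set a := y.1 with ha
    set x : Fin (k + 1) → ℤ := fun j => ∑ i ∈ Finset.range j.val, a (i : Fin (k + 1))
      with hx
    have h1' : ∑ i ∈ Finset.range (k + 1), a (i : Fin (k + 1)) = 0 := by
      rw [Finset.sum_range fun i => a (i : Fin (k+1))]
      simpa [Fin.cast_val_eq_self] using h1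
    have key : ∀ j : Fin (k + 1), x (j + 1) - x j = a j := by
      intro j
      rcases lt_or_eq_of_le (Nat.lt_succ_iff.mp j.isLt) with hj | hj
      · have hval : (j + 1 : Fin (k + 1)).val = j.val + 1 := by
          have : ((1 : Fin (k+1)) : ℕ) = 1 := by
            simp [Fin.val_one']
            omega
          rw [Fin.val_add, this]
          exact Nat.mod_eq_of_lt (by omega)
        simp only [hx, hval, Finset.sum_range_succ, Fin.cast_val_eq_self]
        ring
      · have hval : (j + 1 : Fin (k + 1)).val = 0 := by
          have : ((1 : Fin (k+1)) : ℕ) = 1 := by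
            simp [Fin.val_one']
            omega
          rw [Fin.val_add, this, hj]
          simp
        have hjk : ((k : ℕ) : Fin (k+1)) = j :=
          Fin.ext (by rw [Fin.val_cast_of_lt (by omega)]; omega)
        have := h1'
        rw [Finset.sum_range_succ, hjk] at this
        simp only [hx, hval, Finset.range_zero, Finset.sum_empty, hj]
        linarith
    refine ⟨x, ?_⟩
    apply Prod.ext
    · funext j
      exact (key j).symm
    · funext j
      show y.2 j = x j - x (j + 1)
      rw [h3' j]
      linarith [key j]
  · rintro ⟨x, rfl⟩
    simp only [Pmap, Qmap, Prod.ext_iff]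
    refine ⟨?_, ?_, ?_⟩
    · simp [Finset.sum_sub_distrib, sum_shift k x]
    · simp [Finset.sum_sub_distrib, sum_shift k x]
    · funext i; simp
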